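/- Fix 1 ≤ p < 2 and set α = 2 − p. Let u satisfy Hypothesis B on an open set containing the closed ball of radius R₀ > 0 about 0 in ℝⁿ, and define the rescaled functions u_r(x) = (u(rx) − u(0))/r^α for r > 0 (defined for |x| ≤ R₀/r). Let Θ^M(u, 0) = lim_{t↓0} (M(u, 0, t) − u(0))/t^α. Then: (i) for every ρ > 0, limsup_{r↓0} ‖u_r‖_α(B_ρ) ≤ Θ^M(u, 0), where ‖v‖_α(B_ρ) = sup_{x ≠ y, |x|,|y| ≤ ρ} |v(x) − v(y)|/|x−y|^α; in particular for every ρ > 0 there is δ > 0 such that the family {u_r}_{0 < r ≤ δ} is bounded in α-Hölder seminorm on the closed ball B_ρ; and (ii) every sequence r_j ↓ 0 has a subsequence along which u_{r_j} converges uniformly on compact subsets of ℝⁿ. -/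

import Mathlib

open Set Filter Topology

noncomputable section

abbrev EucSp (n : ℕ) := EuclideanSpace ℝ (Fin n)

/-- The ball maximum `M(u, y, t) = sup_{|x − y| ≤ t} u(x)` (so `M(u, y, 0) = u(y)`). -/
def ballSup {n : ℕ} (u : EucSp n → EReal) (y : EucSp n) (t : ℝ) : EReal :=
  sSup (u '' Metric.closedBall y t)

/-- Hypothesis B (for `1 ≤ p < 2`, `α = 2 − p`): `X` is open, `u` is upper
semicontinuous with values in `[−∞, ∞)`, not identically `−∞` on any ball contained
in `X`, the maximum principle holds, and `K_p` double monotonicity holds: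
`(M(u,y,t) − M(u,y,s))/(t^α − s^α)` is nondecreasing in `s` and `t` (stated in
cross-multiplied form in `EReal`). -/
def HypB {n : ℕ} (p : ℝ) (X : Set (EucSp n)) (u : EucSp n → EReal) : Prop :=
  IsOpen X ∧ UpperSemicontinuousOn u X ∧ (∀ x ∈ X, u x < ⊤) ∧
  (∀ y : EucSp n, ∀ r : ℝ, 0 < r → Metric.closedBall y r ⊆ X →
    ∃ x ∈ Metric.closedBall y r, u x ≠ ⊥) ∧
  (∀ y : EucSp n, ∀ t : ℝ, 0 < t → Metric.closedBall y t ⊆ X →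
    ballSup u y t = sSup (u '' Metric.sphere y t)) ∧
  (∀ y ∈ X, ∀ s t s' t' : ℝ, 0 ≤ s → s < t → s ≤ s' → t ≤ t' → s' < t' →
    Metric.closedBall y t' ⊆ X →
    (ballSup u y t - ballSup u y s) * (((t' ^ (2 - p) - s' ^ (2 - p) : ℝ)) : EReal) ≤
      (ballSup u y t' - ballSup u y s') * (((t ^ (2 - p) - s ^ (2 - p) : ℝ)) : EReal))

/-- The `α`-Hölder seminorm of a real-valued function `v` on a set `K`. -/
def holderSemiR {n : ℕ} (α : ℝ) (v : EucSp n → ℝ) (K : Set (EucSp n)) : ℝ :=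
  sSup {c : ℝ | ∃ x ∈ K, ∃ y ∈ K, x ≠ y ∧ c = |v x - v y| / dist x y ^ α}

open Metric

set_option maxHeartbeats 1000000

variable {n : ℕ} {p : ℝ} {X : Set (EucSp n)} {u : EucSp n → EReal}

lemma le_ballSup {y x : EucSp n} {t : ℝ} (hx : x ∈ Metric.closedBall y t) :
    u x ≤ ballSup u y t := le_sSup (mem_image_of_mem _ hx)

lemma ballSup_mono {y y' : EucSp n} {t t' : ℝ}
    (h : Metric.closedBall y t ⊆ Metric.closedBall y' t') :
    ballSup u y t ≤ ballSup u y' t' := sSup_le_sSup (image_mono h)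

lemma ballSup_zero {y : EucSp n} : ballSup u y 0 = u y := by
  rw [ballSup, Metric.closedBall_zero, image_singleton, sSup_singleton]

lemma ballSup_ne_top (hB : HypB p X u) {y : EucSp n} {t : ℝ}
    (hsub : Metric.closedBall y t ⊆ X) : ballSup u y t ≠ ⊤ := by
  obtain ⟨hX, husc, htop, -⟩ := hB
  have hK : IsCompact (Metric.closedBall y t) := isCompact_closedBall y t
  have : ∃ c : ℝ, ∀ z ∈ Metric.closedBall y t, u z ≤ (c : EReal) := by
    refine hK.induction_on ⟨0, by simp⟩ (fun s s' hss' ⟨c, hc⟩ => ⟨c, fun z hz => hc z (hss' hz)⟩)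
      (fun s s' ⟨c, hc⟩ ⟨c', hc'⟩ => ⟨max c c', fun z hz => hz.elim
        (fun h => (hc z h).trans (by exact_mod_cast le_max_left c c'))
        (fun h => (hc' z h).trans (by exact_mod_cast le_max_right c c'))⟩) ?_
    intro x hx
    obtain ⟨c, hc1, -⟩ := EReal.lt_iff_exists_real_btwn.mp (htop x (hsub hx))
    have hev : ∀ᶠ z in 𝓝[Metric.closedBall y t] x, u z < (c : EReal) :=
      (husc x (hsub hx) (c : EReal) hc1).filter_mono (nhdsWithin_mono x hsub)
    exact ⟨{z | u z < (c : EReal)}, hev, c, fun z hz => le_of_lt hz⟩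
  obtain ⟨c, hc⟩ := this
  have : ballSup u y t ≤ (c : EReal) := sSup_le (by rintro e ⟨z, hz, rfl⟩; exact hc z hz)
  exact fun h => by simp [h] at this

lemma ballSup_ne_bot (hB : HypB p X u) {y : EucSp n} {t : ℝ} (ht : 0 < t)
    (hsub : Metric.closedBall y t ⊆ X) : ballSup u y t ≠ ⊥ := by
  obtain ⟨x, hx, hxb⟩ := hB.2.2.2.1 y t ht hsub
  intro h
  exact hxb (le_bot_iff.mp (h ▸ le_ballSup hx))

lemma u_ne_bot (hB : HypB p X u) (hp2 : p < 2) {y : EucSp n} {t : ℝ} (ht : 0 < t)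
    (hsub : Metric.closedBall y t ⊆ X) : u y ≠ ⊥ := by
  intro hyb
  have hα : (0:ℝ) < 2 - p := by linarith
  set s := t / 2 with hs
  have hs0 : 0 < s := by positivity
  have hst : s < t := by simp [hs]; linarith
  have hsubs : Metric.closedBall y s ⊆ X :=
    (Metric.closedBall_subset_closedBall hst.le).trans hsub
  have hyX : y ∈ X := hsub (Metric.mem_closedBall_self ht.le)
  have H := hB.2.2.2.2.2 y hyX 0 t s t le_rfl ht hs0.le le_rfl hst hsub
  rw [ballSup_zero, hyb] at H
  have hMt_ne_bot : ballSup u y t ≠ ⊥ := ballSup_ne_bot hB ht hsub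
  have hMt_ne_top : ballSup u y t ≠ ⊤ := ballSup_ne_top hB hsub
  have hMs_ne_bot : ballSup u y s ≠ ⊥ := ballSup_ne_bot hB hs0 hsubs
  have hc1 : (0:ℝ) < t ^ (2-p) - s ^ (2-p) :=
    sub_pos.mpr (Real.rpow_lt_rpow hs0.le hst hα)
  rw [EReal.sub_bot hMt_ne_bot, EReal.top_mul_coe_of_pos hc1] at H
  have hMs_ne_top : ballSup u y s ≠ ⊤ := ballSup_ne_top hB hsubs
  obtain ⟨a, ha⟩ : ∃ a : ℝ, ballSup u y t = (a : EReal) :=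
    ⟨_, (EReal.coe_toReal hMt_ne_top hMt_ne_bot).symm⟩
  obtain ⟨b, hb⟩ : ∃ b : ℝ, ballSup u y s = (b : EReal) :=
    ⟨_, (EReal.coe_toReal hMs_ne_top hMs_ne_bot).symm⟩
  rw [ha, hb, ← EReal.coe_sub, ← EReal.coe_mul, top_le_iff] at H
  exact (EReal.coe_ne_top _) H

lemma ballSup_finite (hB : HypB p X u) (hp2 : p < 2) {y : EucSp n} {t' : ℝ} (ht' : 0 < t')
    (hsub : Metric.closedBall y t' ⊆ X) {τ : ℝ} (h0 : 0 ≤ τ) (h1 : τ ≤ t') :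
    ballSup u y τ = ((ballSup u y τ).toReal : EReal) := by
  have hsubτ : Metric.closedBall y τ ⊆ X :=
    (Metric.closedBall_subset_closedBall h1).trans hsub
  have hne_top : ballSup u y τ ≠ ⊤ := ballSup_ne_top hB hsubτ
  have hne_bot : ballSup u y τ ≠ ⊥ := by
    have huy : u y ≠ ⊥ := u_ne_bot hB hp2 ht' hsub
    exact fun h => huy (le_bot_iff.mp (h ▸ le_ballSup (Metric.mem_closedBall_self h0)))
  exact (EReal.coe_toReal hne_top hne_bot).symm

lemma cross_real (hB : HypB p X u) (hp2 : p < 2) {y : EucSp n} {s t s' t' : ℝ}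
    (hs : 0 ≤ s) (hst : s < t) (hss' : s ≤ s') (htt' : t ≤ t') (hs't' : s' < t')
    (hsub : Metric.closedBall y t' ⊆ X) :
    ((ballSup u y t).toReal - (ballSup u y s).toReal) * (t' ^ (2-p) - s' ^ (2-p)) ≤
      ((ballSup u y t').toReal - (ballSup u y s').toReal) * (t ^ (2-p) - s ^ (2-p)) := by
  have ht'0 : 0 < t' := lt_of_le_of_lt (hs.trans hss') hs't'
  have hyX : y ∈ X := hsub (Metric.mem_closedBall_self ht'0.le)
  have H := hB.2.2.2.2.2 y hyX s t s' t' hs hst hss' htt' hs't' hsub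
  rw [ballSup_finite hB hp2 ht'0 hsub hs (hst.le.trans htt'),
    ballSup_finite hB hp2 ht'0 hsub (hs.trans hst.le) htt',
    ballSup_finite hB hp2 ht'0 hsub (hs.trans hss') hs't'.le,
    ballSup_finite hB hp2 ht'0 hsub (hs.trans (hst.le.trans htt')) le_rfl] at H
  rw [← EReal.coe_sub, ← EReal.coe_sub, ← EReal.coe_mul, ← EReal.coe_mul] at H
  exact_mod_cast H

lemma Q_mono (hB : HypB p X u) (hp2 : p < 2) {R₀ : ℝ}
    (hball : Metric.closedBall (0 : EucSp n) R₀ ⊆ X) {τ τ' : ℝ}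
    (hτ : 0 < τ) (hττ' : τ ≤ τ') (hτ' : τ' ≤ R₀) :
    ((ballSup u 0 τ).toReal - (u 0).toReal) / τ ^ (2 - p) ≤
      ((ballSup u 0 τ').toReal - (u 0).toReal) / τ' ^ (2 - p) := by
  have hα : (0:ℝ) < 2 - p := by linarith
  have hτ'0 : 0 < τ' := hτ.trans_le hττ'
  have H := cross_real (y := (0 : EucSp n)) hB hp2 le_rfl hτ le_rfl hττ' hτ'0
    ((Metric.closedBall_subset_closedBall hτ').trans hball)
  rw [Real.zero_rpow hα.ne', sub_zero, sub_zero] at H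
  rw [div_le_div_iff₀ (Real.rpow_pos_of_pos hτ _) (Real.rpow_pos_of_pos hτ'0 _)]
  simpa [ballSup_zero] using H

lemma Q_nonneg (hB : HypB p X u) (hp2 : p < 2) {R₀ : ℝ} (hR₀ : 0 < R₀)
    (hball : Metric.closedBall (0 : EucSp n) R₀ ⊆ X) {τ : ℝ}
    (hτ : 0 < τ) (hτ' : τ ≤ R₀) :
    0 ≤ ((ballSup u 0 τ).toReal - (u 0).toReal) / τ ^ (2 - p) := by
  have hsubτ : Metric.closedBall (0 : EucSp n) τ ⊆ X :=
    (Metric.closedBall_subset_closedBall hτ').trans hball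
  have h1 : u 0 ≤ ballSup u 0 τ := le_ballSup (Metric.mem_closedBall_self hτ.le)
  have h2 : (u 0).toReal ≤ (ballSup u 0 τ).toReal :=
    EReal.toReal_le_toReal h1 (u_ne_bot hB hp2 hτ hsubτ) (ballSup_ne_top hB hsubτ)
  have h3 := Real.rpow_pos_of_pos hτ (2 - p)
  exact div_nonneg (by linarith) h3.le

lemma theta_package (hB : HypB p X u) (hp2 : p < 2) {R₀ : ℝ} (hR₀ : 0 < R₀)
    (hball : Metric.closedBall (0 : EucSp n) R₀ ⊆ X) :
    ∃ Θ : ℝ, 0 ≤ Θ ∧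
      Tendsto (fun t : ℝ => ((ballSup u 0 t).toReal - (u 0).toReal) / t ^ (2 - p))
        (𝓝[>] 0) (𝓝 Θ) ∧
      (∀ τ, 0 < τ → τ ≤ R₀ → Θ ≤ ((ballSup u 0 τ).toReal - (u 0).toReal) / τ ^ (2 - p)) ∧
      (∀ ε : ℝ, 0 < ε → ∃ τ₀, 0 < τ₀ ∧ τ₀ ≤ R₀ ∧ ∀ τ, 0 < τ → τ ≤ τ₀ →
        ((ballSup u 0 τ).toReal - (u 0).toReal) / τ ^ (2 - p) ≤ Θ + ε) := by
  set Q : ℝ → ℝ := fun τ => ((ballSup u 0 τ).toReal - (u 0).toReal) / τ ^ (2 - p) with hQ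
  set Qe : ℝ → ℝ := fun τ => Q (min τ R₀) with hQe
  have hmem : ∀ τ : ℝ, 0 < τ → (0 < min τ R₀ ∧ min τ R₀ ≤ R₀) :=
    fun τ hτ => ⟨lt_min hτ hR₀, min_le_right _ _⟩
  have hQemono : MonotoneOn Qe (Ioi (0:ℝ)) := by
    intro a ha b hb hab
    exact Q_mono hB hp2 hball (hmem a ha).1 (min_le_min hab le_rfl) (hmem b hb).2
  have hQenn : ∀ q ∈ Qe '' Ioi (0:ℝ), 0 ≤ q := by
    rintro q ⟨τ, hτ, rfl⟩
    exact Q_nonneg hB hp2 hR₀ hball (hmem τ hτ).1 (hmem τ hτ).2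
  have hbdd : BddBelow (Qe '' Ioi (0:ℝ)) := ⟨0, hQenn⟩
  have hne : (Qe '' Ioi (0:ℝ)).Nonempty := ⟨Qe 1, mem_image_of_mem _ (mem_Ioi.mpr (zero_lt_one : (0:ℝ) < 1))⟩
  refine ⟨sInf (Qe '' Ioi (0:ℝ)), le_csInf hne hQenn, ?_, ?_, ?_⟩
  · have htds := hQemono.tendsto_nhdsGT hbdd
    refine htds.congr' ?_
    filter_upwards [Ioc_mem_nhdsGT_of_mem (by exact ⟨le_rfl, hR₀⟩ : (0:ℝ) ∈ Ico 0 R₀)]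
      with τ hτ
    simp only [hQe, min_eq_left hτ.2]
  · intro τ hτ hτR
    have : Q τ = Qe τ := by simp only [hQe, min_eq_left hτR]
    rw [show ((ballSup u 0 τ).toReal - (u 0).toReal) / τ ^ (2 - p) = Q τ from rfl, this]
    exact csInf_le hbdd (mem_image_of_mem _ hτ)
  · intro ε hε
    obtain ⟨q, ⟨τ₁, hτ₁, rfl⟩, hqlt⟩ :=
      exists_lt_of_csInf_lt hne (lt_add_of_pos_right _ hε)
    refine ⟨min τ₁ R₀, (hmem τ₁ hτ₁).1, (hmem τ₁ hτ₁).2, fun τ hτ hττ₀ => ?_⟩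
    exact (Q_mono hB hp2 hball hτ hττ₀ (hmem τ₁ hτ₁).2).trans hqlt.le

lemma exists_c {α ρ ε₁ : ℝ} (hα : 0 < α) (hρ : 0 < ρ) (hε₁ : 0 < ε₁) :
    ∃ c : ℝ, 2 * ρ + 1 ≤ c ∧ ρ < c ∧ 0 < c ^ α - ρ ^ α ∧
      (ρ + c) ^ α ≤ (1 + ε₁) * (c ^ α - ρ ^ α) := by
  have h1 : Tendsto (fun c : ℝ => ρ / c) atTop (𝓝 0) := tendsto_const_nhds.div_atTop tendsto_id
  have h2 : Tendsto (fun c : ℝ => 1 + ρ / c) atTop (𝓝 1) := by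
    simpa using tendsto_const_nhds.add h1
  have h2' : Tendsto (fun c : ℝ => (1 + ρ / c) ^ α) atTop (𝓝 1) := by
    simpa [Real.one_rpow] using h2.rpow_const (Or.inl one_ne_zero)
  have h3 : Tendsto (fun c : ℝ => ρ ^ α / c ^ α) atTop (𝓝 0) :=
    tendsto_const_nhds.div_atTop (tendsto_rpow_atTop hα)
  have h4 : Tendsto (fun c : ℝ => (1 + ε₁) * (1 - ρ ^ α / c ^ α) - (1 + ρ / c) ^ α)
      atTop (𝓝 ε₁) := by
    have ha : Tendsto (fun c : ℝ => (1 + ε₁) * (1 - ρ ^ α / c ^ α)) atTop (𝓝 ((1+ε₁)*(1-0))) :=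
      Tendsto.mul tendsto_const_nhds (Tendsto.sub tendsto_const_nhds h3)
    have hb := ha.sub h2'
    have : (1+ε₁)*(1-(0:ℝ)) - 1 = ε₁ := by ring
    rwa [this] at hb
  have hev := (h4.eventually (eventually_gt_nhds hε₁)).and
    ((eventually_ge_atTop (2 * ρ + 1)).and (eventually_gt_atTop 0))
  obtain ⟨c, hgt, hc1, hc0⟩ := hev.exists
  have hρc : ρ < c := by linarith
  have hpos : 0 < c ^ α - ρ ^ α := sub_pos.mpr (Real.rpow_lt_rpow hρ.le hρc hα)
  refine ⟨c, hc1, hρc, hpos, ?_⟩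
  have hcα : 0 < c ^ α := Real.rpow_pos_of_pos hc0 α
  have e1 : (ρ + c) ^ α = (1 + ρ / c) ^ α * c ^ α := by
    rw [← Real.mul_rpow (by positivity) hc0.le]
    congr 1
    field_simp
    ring
  have e2 : (1 + ε₁) * (c ^ α - ρ ^ α) = (1 + ε₁) * (1 - ρ ^ α / c ^ α) * c ^ α := by
    field_simp
  rw [e1, e2]
  have : (1 + ρ / c) ^ α ≤ (1 + ε₁) * (1 - ρ ^ α / c ^ α) := by linarith [hgt]
  exact mul_le_mul_of_nonneg_right this hcα.le

lemma key (hB : HypB p X u) (hp2 : p < 2) {R₀ : ℝ} (hR₀ : 0 < R₀)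
    (hball : Metric.closedBall (0 : EucSp n) R₀ ⊆ X) {Θ : ℝ} (hΘ0 : 0 ≤ Θ)
    (happrox : ∀ ε : ℝ, 0 < ε → ∃ τ₀, 0 < τ₀ ∧ τ₀ ≤ R₀ ∧ ∀ τ, 0 < τ → τ ≤ τ₀ →
        ((ballSup u 0 τ).toReal - (u 0).toReal) / τ ^ (2 - p) ≤ Θ + ε) :
    ∀ ρ : ℝ, 0 < ρ → ∀ ε : ℝ, 0 < ε → ∃ δ : ℝ, 0 < δ ∧ ∀ r : ℝ, 0 < r → r ≤ δ →
      ∀ x ∈ Metric.closedBall (0:EucSp n) ρ, ∀ y ∈ Metric.closedBall (0:EucSp n) ρ,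
        |((u (r • x)).toReal - (u 0).toReal) / r ^ (2-p)
          - ((u (r • y)).toReal - (u 0).toReal) / r ^ (2-p)|
          ≤ (Θ + ε) * dist x y ^ (2 - p) := by
  intro ρ hρ ε hε
  have hα : (0:ℝ) < 2 - p := by linarith
  have hD : (0:ℝ) < Θ + ε/2 + 1 := by linarith
  set ε₁ := ε / (2 * (Θ + ε/2 + 1)) with hε₁def
  have hε₁ : 0 < ε₁ := by positivity
  obtain ⟨c, hc1, hρc, hapos, hcb⟩ := exists_c hα hρ hε₁
  obtain ⟨τ₀, hτ₀, hτ₀R, hQle⟩ := happrox (ε/2) (half_pos hε)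
  have hρc0 : 0 < ρ + c := by linarith
  have hc0 : 0 < c := hρ.trans hρc
  refine ⟨τ₀ / (ρ + c), by positivity, ?_⟩
  intro r hr hrδ
  have hrα : 0 < r ^ (2-p) := Real.rpow_pos_of_pos hr _
  have hτr : (ρ + c) * r ≤ τ₀ := by
    rw [mul_comm]; exact (le_div_iff₀ hρc0).mp hrδ
  have hsub0 : Metric.closedBall (0:EucSp n) ((ρ+c)*r) ⊆ X :=
    (Metric.closedBall_subset_closedBall (hτr.trans hτ₀R)).trans hball
  have hu0_ne : u 0 ≠ ⊥ := u_ne_bot hB hp2 hR₀ hball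
  have hone : ∀ x ∈ Metric.closedBall (0:EucSp n) ρ, ∀ y ∈ Metric.closedBall (0:EucSp n) ρ,
      x ≠ y →
      ((u (r • x)).toReal - (u (r • y)).toReal) / r ^ (2-p) ≤ (Θ + ε) * dist x y ^ (2-p) := by
    intro x hx y hy hxy
    have hxn : ‖x‖ ≤ ρ := mem_closedBall_zero_iff.mp hx
    have hyn : ‖y‖ ≤ ρ := mem_closedBall_zero_iff.mp hy
    have hYb : dist (r • y) (0:EucSp n) ≤ ρ * r := by
      rw [dist_zero_right, norm_smul, Real.norm_of_nonneg hr.le, mul_comm]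
      exact mul_le_mul_of_nonneg_right hyn hr.le
    have hXb : dist (r • x) (0:EucSp n) ≤ ρ * r := by
      rw [dist_zero_right, norm_smul, Real.norm_of_nonneg hr.le, mul_comm]
      exact mul_le_mul_of_nonneg_right hxn hr.le
    have hexpand : (ρ+c)*r = ρ*r + c*r := by ring
    have hsubY : Metric.closedBall (r • y) (c*r) ⊆ Metric.closedBall (0:EucSp n) ((ρ+c)*r) :=
      Metric.closedBall_subset_closedBall' (by linarith)
    have hsubYX : Metric.closedBall (r • y) (c*r) ⊆ X := hsubY.trans hsub0
    have hcr : 0 < c*r := mul_pos hc0 hr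
    have hYX : r • y ∈ X := hsubYX (Metric.mem_closedBall_self hcr.le)
    have hd : dist (r•x) (r•y) = r * dist x y := by
      rw [dist_smul₀, Real.norm_of_nonneg hr.le]
    have hdxy : 0 < dist x y := dist_pos.mpr hxy
    have hd0 : 0 < dist (r•x) (r•y) := by rw [hd]; positivity
    have hdxy2ρ : dist x y ≤ 2*ρ := by
      have := dist_triangle x 0 y
      rw [dist_zero_right, dist_zero_left] at this
      linarith
    have hdcr : dist (r•x) (r•y) ≤ c*r := by
      rw [hd, mul_comm]
      exact mul_le_mul_of_nonneg_right (by linarith) hr.le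
    have hρrcr : ρ*r < c*r := mul_lt_mul_of_pos_right hρc hr
    have H := cross_real (y := r•y) hB hp2 le_rfl hd0 (by positivity : (0:ℝ) ≤ ρ*r) hdcr hρrcr
      hsubYX
    rw [Real.zero_rpow hα.ne', sub_zero, ballSup_zero] at H
    have huy_ne : u (r•y) ≠ ⊥ := u_ne_bot hB hp2 hcr hsubYX
    have hxmem : r•x ∈ Metric.closedBall (r•y) (dist (r•x) (r•y)) := Metric.mem_closedBall.mpr le_rfl
    have hsubd : Metric.closedBall (r•y) (dist (r•x) (r•y)) ⊆ X :=
      (Metric.closedBall_subset_closedBall hdcr).trans hsubYX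
    have hsX' : Metric.closedBall (r•x) (c*r) ⊆ X := by
      refine (Metric.closedBall_subset_closedBall' (by linarith)).trans hsub0
    have hux_ne : u (r•x) ≠ ⊥ := u_ne_bot hB hp2 hcr hsX'
    have b1 : (u (r•x)).toReal ≤ (ballSup u (r•y) (dist (r•x) (r•y))).toReal :=
      EReal.toReal_le_toReal (le_ballSup hxmem) hux_ne (ballSup_ne_top hB hsubd)
    have b2 : (ballSup u (r•y) (c*r)).toReal ≤ (ballSup u 0 ((ρ+c)*r)).toReal :=
      EReal.toReal_le_toReal (ballSup_mono hsubY) (ballSup_ne_bot hB hcr hsubYX)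
        (ballSup_ne_top hB hsub0)
    have h0mem : (0:EucSp n) ∈ Metric.closedBall (r•y) (ρ*r) := by
      rw [Metric.mem_closedBall, dist_comm]; exact hYb
    have b3 : (u 0).toReal ≤ (ballSup u (r•y) (ρ*r)).toReal :=
      EReal.toReal_le_toReal (le_ballSup h0mem) hu0_ne
        (ballSup_ne_top hB ((Metric.closedBall_subset_closedBall hρrcr.le).trans hsubYX))
    have b4 : (ballSup u 0 ((ρ+c)*r)).toReal - (u 0).toReal ≤ (Θ + ε/2) * ((ρ+c)*r) ^ (2-p) := by
      have hq := hQle ((ρ+c)*r) (by positivity) hτr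
      exact (div_le_iff₀ (Real.rpow_pos_of_pos (by positivity) _)).mp hq
    have hP : 0 < (c*r)^(2-p) - (ρ*r)^(2-p) :=
      sub_pos.mpr (Real.rpow_lt_rpow (by positivity) hρrcr hα)
    have hzα : (0:ℝ) ≤ dist (r•x) (r•y) ^ (2-p) := Real.rpow_nonneg dist_nonneg _
    have hbig : ((u (r•x)).toReal - (u (r•y)).toReal) * ((c*r)^(2-p) - (ρ*r)^(2-p)) ≤
        ((Θ + ε/2) * ((ρ+c)*r) ^ (2-p)) * (dist (r•x) (r•y)) ^ (2-p) := by
      calc ((u (r•x)).toReal - (u (r•y)).toReal) * ((c*r)^(2-p) - (ρ*r)^(2-p))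
          ≤ ((ballSup u (r•y) (dist (r•x) (r•y))).toReal - (u (r•y)).toReal) *
              ((c*r)^(2-p) - (ρ*r)^(2-p)) :=
            mul_le_mul_of_nonneg_right (by linarith) hP.le
        _ ≤ ((ballSup u (r•y) (c*r)).toReal - (ballSup u (r•y) (ρ*r)).toReal) *
              (dist (r•x) (r•y)) ^ (2-p) := H
        _ ≤ ((ballSup u 0 ((ρ+c)*r)).toReal - (u 0).toReal) * (dist (r•x) (r•y)) ^ (2-p) :=
            mul_le_mul_of_nonneg_right (by linarith) hzα
        _ ≤ ((Θ + ε/2) * ((ρ+c)*r) ^ (2-p)) * (dist (r•x) (r•y)) ^ (2-p) :=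
            mul_le_mul_of_nonneg_right b4 hzα
    have exp1 : ((ρ+c)*r)^(2-p) = (ρ+c)^(2-p) * r^(2-p) := Real.mul_rpow hρc0.le hr.le
    have exp4 : (dist (r•x) (r•y))^(2-p) = r^(2-p) * dist x y^(2-p) := by
      rw [hd]; exact Real.mul_rpow hr.le dist_nonneg
    have expP : (c*r)^(2-p) - (ρ*r)^(2-p) = (c^(2-p) - ρ^(2-p)) * r^(2-p) := by
      rw [Real.mul_rpow hc0.le hr.le, Real.mul_rpow hρ.le hr.le]; ring
    rw [expP, exp1, exp4] at hbig
    set A := (u (r•x)).toReal - (u (r•y)).toReal with hA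
    set a := c^(2-p) - ρ^(2-p) with ha
    set w := r^(2-p) with hw
    set z := dist x y^(2-p) with hz
    set b := (ρ+c)^(2-p) with hb
    have step1 : A * a ≤ (Θ+ε/2) * b * (w*z) := by
      have h' : (A * a) * w ≤ ((Θ+ε/2) * b * (w*z)) * w := by
        calc (A * a) * w = A * (a * w) := by ring
          _ ≤ (Θ+ε/2) * (b * w) * (w * z) := hbig
          _ = ((Θ+ε/2) * b * (w*z)) * w := by ring
      exact le_of_mul_le_mul_right h' hrα
    have k2 : (Θ+ε/2)*(1+ε₁) ≤ Θ+ε := by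
      rw [hε₁def]
      have e1 : (Θ+ε/2) * ε / (2*(Θ+ε/2+1)) ≤ ε/2 := by
        rw [div_le_iff₀ (by positivity)]; nlinarith
      have e2 : (Θ+ε/2)*(1+ε/(2*(Θ+ε/2+1))) = (Θ+ε/2) + (Θ+ε/2)*ε/(2*(Θ+ε/2+1)) := by ring
      rw [e2]; linarith
    have step2 : (Θ+ε/2)*b ≤ (Θ+ε)*a := by
      calc (Θ+ε/2)*b ≤ (Θ+ε/2)*((1+ε₁)*a) := mul_le_mul_of_nonneg_left hcb (by linarith)
        _ = ((Θ+ε/2)*(1+ε₁))*a := by ring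
        _ ≤ (Θ+ε)*a := mul_le_mul_of_nonneg_right k2 hapos.le
    have hwz0 : (0:ℝ) ≤ w*z := mul_nonneg hrα.le (Real.rpow_nonneg dist_nonneg _)
    have step3 : A * a ≤ ((Θ+ε)*(w*z))*a := by
      calc A*a ≤ (Θ+ε/2)*b*(w*z) := step1
        _ ≤ ((Θ+ε)*a)*(w*z) := mul_le_mul_of_nonneg_right step2 hwz0
        _ = ((Θ+ε)*(w*z))*a := by ring
    have step4 : A ≤ (Θ+ε)*(w*z) := le_of_mul_le_mul_right step3 hapos
    rw [div_le_iff₀ hrα]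
    calc A ≤ (Θ+ε)*(w*z) := step4
      _ = (Θ+ε)*z*w := by ring
  intro x hx y hy
  rcases eq_or_ne x y with rfl | hxy
  · rw [sub_self, abs_zero, dist_self, Real.zero_rpow hα.ne', mul_zero]
  · rw [abs_sub_le_iff]
    constructor
    · rw [div_sub_div_same, sub_sub_sub_cancel_right]
      exact hone x hx y hy hxy
    · rw [div_sub_div_same, sub_sub_sub_cancel_right, dist_comm]
      exact hone y hy x hx hxy.symm


/-- Existence of tangents for `1 ≤ p < 2`: the rescalings
`u_r(x) = (u(rx) − u(0))/r^α` have `limsup_{r↓0} ‖u_r‖_α(B_ρ) ≤ Θ^M(u,0)`, are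
eventually bounded in `α`-Hölder seminorm, and every sequence `r_j ↓ 0` has a
subsequence along which `u_{r_j}` converges locally uniformly. -/
theorem stmt17 (n : ℕ) (p : ℝ) (hp1 : 1 ≤ p) (hp2 : p < 2)
    (R₀ : ℝ) (hR₀ : 0 < R₀)
    (X : Set (EucSp n)) (u : EucSp n → EReal) (hB : HypB p X u)
    (hball : Metric.closedBall (0 : EucSp n) R₀ ⊆ X) :
    ∃ Θ : ℝ,
      Tendsto (fun t : ℝ => ((ballSup u 0 t).toReal - (u 0).toReal) / t ^ (2 - p))
        (𝓝[>] 0) (𝓝 Θ) ∧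
      -- (i) limsup of the Hölder seminorms of the rescalings is at most Θ^M(u, 0)
      (∀ ρ : ℝ, 0 < ρ → ∀ ε : ℝ, 0 < ε → ∃ δ : ℝ, 0 < δ ∧ ∀ r : ℝ, 0 < r → r ≤ δ →
        holderSemiR (2 - p)
            (fun x => ((u (r • x)).toReal - (u 0).toReal) / r ^ (2 - p))
            (Metric.closedBall (0 : EucSp n) ρ) ≤ Θ + ε) ∧
      -- in particular the family {u_r} is bounded in Hölder seminorm on each ball
      (∀ ρ : ℝ, 0 < ρ → ∃ δ : ℝ, 0 < δ ∧ ∃ C : ℝ, ∀ r : ℝ, 0 < r → r ≤ δ →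
        holderSemiR (2 - p)
            (fun x => ((u (r • x)).toReal - (u 0).toReal) / r ^ (2 - p))
            (Metric.closedBall (0 : EucSp n) ρ) ≤ C) ∧
      -- (ii) every sequence r_j ↓ 0 has a locally uniformly convergent subsequence
      (∀ rj : ℕ → ℝ, (∀ j, 0 < rj j) → Tendsto rj atTop (𝓝 0) →
        ∃ σ : ℕ → ℕ, StrictMono σ ∧ ∃ v : EucSp n → ℝ,
          TendstoLocallyUniformly
            (fun j x => ((u (rj (σ j) • x)).toReal - (u 0).toReal) / rj (σ j) ^ (2 - p))
            v atTop) := by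
  have hα : (0:ℝ) < 2 - p := by linarith
  obtain ⟨Θ, hΘ0, htds, hlow, happrox⟩ := theta_package hB hp2 hR₀ hball
  have hkey := key hB hp2 hR₀ hball hΘ0 happrox
  have hi : ∀ ρ : ℝ, 0 < ρ → ∀ ε : ℝ, 0 < ε → ∃ δ : ℝ, 0 < δ ∧ ∀ r : ℝ, 0 < r → r ≤ δ →
      holderSemiR (2 - p)
          (fun x => ((u (r • x)).toReal - (u 0).toReal) / r ^ (2 - p))
          (Metric.closedBall (0 : EucSp n) ρ) ≤ Θ + ε := by
    intro ρ hρ ε hε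
    obtain ⟨δ, hδ, hδ2⟩ := hkey ρ hρ ε hε
    refine ⟨δ, hδ, fun r hr hrδ => ?_⟩
    apply Real.sSup_le _ (by linarith)
    rintro cc ⟨x, hx, y, hy, hxy, rfl⟩
    have h := hδ2 r hr hrδ x hx y hy
    have hdp : 0 < dist x y ^ (2-p) := Real.rpow_pos_of_pos (dist_pos.mpr hxy) _
    rw [div_le_iff₀ hdp]
    exact h
  refine ⟨Θ, htds, hi, ?_, ?_⟩
  · intro ρ hρ
    obtain ⟨δ, hδ, hδ2⟩ := hi ρ hρ 1 one_pos
    exact ⟨δ, hδ, Θ + 1, hδ2⟩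
  · intro rj hrjpos hrj0
    have hkey' : ∀ k : ℕ, ∃ δ : ℝ, 0 < δ ∧ ∀ r : ℝ, 0 < r → r ≤ δ →
        ∀ x ∈ Metric.closedBall (0:EucSp n) ((k:ℝ)+1),
          ∀ y ∈ Metric.closedBall (0:EucSp n) ((k:ℝ)+1),
        |((u (r • x)).toReal - (u 0).toReal) / r ^ (2-p)
          - ((u (r • y)).toReal - (u 0).toReal) / r ^ (2-p)|
          ≤ (Θ + 1) * dist x y ^ (2 - p) :=
      fun k => hkey ((k:ℝ)+1) (by positivity) 1 one_pos
    choose δk hδk hHold using hkey'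
    have hC0 : (0:ℝ) < Θ + 1 := by linarith
    obtain ⟨D, hD⟩ := TopologicalSpace.exists_dense_seq (EucSp n)
    set F0 : ℕ → EucSp n → ℝ :=
      fun j x => ((u (rj j • x)).toReal - (u 0).toReal) / rj j ^ (2-p) with hF0
    set Kk : ℕ → ℕ := fun k => ⌈‖D k‖⌉₊ with hKk
    have hDk_mem : ∀ k, D k ∈ Metric.closedBall (0:EucSp n) ((Kk k : ℝ)+1) := by
      intro k
      rw [Metric.mem_closedBall, dist_zero_right]
      have h1 := Nat.le_ceil ‖D k‖
      have : ((Kk k : ℝ)) = (⌈‖D k‖⌉₊ : ℝ) := by rw [hKk]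
      linarith [this ▸ h1]
    set B : ℕ → ℝ := fun k => (Θ+1) * ((Kk k : ℝ)+1) ^ (2-p) with hB'
    have hB0 : ∀ k, 0 ≤ B k := fun k => mul_nonneg hC0.le (Real.rpow_nonneg (by positivity) _)
    have hFbound : ∀ k, ∀ j, rj j ≤ δk (Kk k) → |F0 j (D k)| ≤ B k := by
      intro k j hjk
      have h0mem : (0:EucSp n) ∈ Metric.closedBall (0:EucSp n) ((Kk k:ℝ)+1) :=
        Metric.mem_closedBall_self (by positivity)
      have h := hHold (Kk k) (rj j) (hrjpos j) hjk (D k) (hDk_mem k) 0 h0mem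
      rw [smul_zero] at h
      simp only [sub_self, zero_div, sub_zero] at h
      refine le_trans (by exact_mod_cast h) ?_
      have hd1 : dist (D k) 0 ≤ (Kk k : ℝ)+1 := by
        have := hDk_mem k; rwa [Metric.mem_closedBall] at this
      exact mul_le_mul_of_nonneg_left
        (Real.rpow_le_rpow dist_nonneg hd1 hα.le) hC0.le
    set g : ℕ → (ℕ → ℝ) := fun j k => min (max (F0 j (D k)) (-(B k))) (B k) with hg
    have hgmem : ∀ j, g j ∈ Set.univ.pi (fun k => Icc (-(B k)) (B k)) := by
      intro j k _
      refine ⟨le_min (le_max_right _ _) (by linarith [hB0 k]), min_le_right _ _⟩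
    have hcpt : IsCompact (Set.univ.pi (fun k : ℕ => Icc (-(B k)) (B k))) :=
      isCompact_univ_pi (fun k => isCompact_Icc)
    obtain ⟨aa, -, φ, hφ, hconv⟩ := hcpt.tendsto_subseq (x := g) (fun j => hgmem j)
    refine ⟨φ, hφ, ?_⟩
    set F : ℕ → EucSp n → ℝ := fun j => F0 (φ j) with hF
    have hφtop : Tendsto φ atTop atTop := hφ.tendsto_atTop
    have hsmall : ∀ d : ℝ, 0 < d → ∀ᶠ j in atTop, rj (φ j) ≤ d := by
      intro d hd
      exact hφtop.eventually (hrj0.eventually (eventually_le_nhds hd))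
    have hptD : ∀ k, Tendsto (fun j => F j (D k)) atTop (𝓝 (aa k)) := by
      intro k
      have h1 : Tendsto (fun j => g (φ j) k) atTop (𝓝 (aa k)) := by
        have := tendsto_pi_nhds.mp hconv k
        exact this
      refine h1.congr' ?_
      filter_upwards [hsmall (δk (Kk k)) (hδk _)] with j hj
      have hb := abs_le.mp (hFbound k (φ j) hj)
      simp only [hg]
      rw [max_eq_left hb.1, min_eq_left hb.2]
    have hUC : ∀ k : ℕ, UniformCauchySeqOn F atTop
        (Metric.closedBall (0:EucSp n) ((k:ℝ)+1)) := by
      intro k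
      rw [Metric.uniformCauchySeqOn_iff]
      intro ε hε
      set η : ℝ := min 1 ((ε/(8*(Θ+1))) ^ (2-p)⁻¹) with hη
      have hη0 : 0 < η := lt_min one_pos (Real.rpow_pos_of_pos (by positivity) _)
      have hη1 : η ≤ 1 := min_le_left _ _
      have hηα : η ^ (2-p) ≤ ε/(8*(Θ+1)) := by
        calc η ^ (2-p) ≤ ((ε/(8*(Θ+1))) ^ (2-p)⁻¹) ^ (2-p) :=
              Real.rpow_le_rpow hη0.le (min_le_right _ _) hα.le
          _ = ε/(8*(Θ+1)) := Real.rpow_inv_rpow (by positivity) hα.ne'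
      have hcov : Metric.closedBall (0:EucSp n) ((k:ℝ)+1) ⊆
          ⋃ i : ℕ, Metric.ball (D i) η := by
        intro x _
        obtain ⟨i, hi⟩ := hD.exists_dist_lt x hη0
        exact mem_iUnion.mpr ⟨i, Metric.mem_ball.mpr hi⟩
      obtain ⟨T, hT⟩ := (isCompact_closedBall (0:EucSp n) ((k:ℝ)+1)).elim_finite_subcover
        (fun i => Metric.ball (D i) η) (fun i => Metric.isOpen_ball) hcov
      have hCau : ∀ i : ℕ, ∃ N : ℕ, ∀ m ≥ N, ∀ l ≥ N,
          dist (F m (D i)) (F l (D i)) < ε/2 := by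
        intro i
        have hc := (hptD i).cauchySeq
        rw [Metric.cauchySeq_iff] at hc
        exact hc (ε/2) (by positivity)
      choose NN hNN using hCau
      obtain ⟨N₀, hN₀⟩ := eventually_atTop.mp (hsmall (δk (k+1)) (hδk _))
      refine ⟨max N₀ (T.sup NN), ?_⟩
      intro m hm l hl x hx
      obtain ⟨i, hiT, hxb⟩ : ∃ i ∈ T, x ∈ Metric.ball (D i) η := by
        simpa using hT hx
      have hdxDi : dist x (D i) < η := Metric.mem_ball.mp hxb
      have hxk : dist x 0 ≤ (k:ℝ)+1 := Metric.mem_closedBall.mp hx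
      have hxmem2 : x ∈ Metric.closedBall (0:EucSp n) (((k+1:ℕ):ℝ)+1) := by
        rw [Metric.mem_closedBall]; push_cast; linarith
      have hDimem2 : D i ∈ Metric.closedBall (0:EucSp n) (((k+1:ℕ):ℝ)+1) := by
        rw [Metric.mem_closedBall]
        have := dist_triangle (D i) x 0
        rw [dist_comm (D i) x] at this
        push_cast
        linarith
      have hend : ∀ m' : ℕ, m' ≥ max N₀ (T.sup NN) →
          dist (F m' x) (F m' (D i)) ≤ ε/8 := by
        intro m' hm'
        have hr' : rj (φ m') ≤ δk (k+1) := hN₀ m' (le_trans (le_max_left _ _) hm')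
        have h := hHold (k+1) (rj (φ m')) (hrjpos _) hr' x hxmem2 (D i) hDimem2
        rw [Real.dist_eq]
        refine le_trans h ?_
        have h1 : dist x (D i) ^ (2-p) ≤ η ^ (2-p) :=
          Real.rpow_le_rpow dist_nonneg hdxDi.le hα.le
        have h2 : (Θ+1) * dist x (D i) ^ (2-p) ≤ (Θ+1) * (ε/(8*(Θ+1))) :=
          mul_le_mul_of_nonneg_left (h1.trans hηα) hC0.le
        refine h2.trans (le_of_eq ?_)
        field_simp
      have hmid : dist (F m (D i)) (F l (D i)) < ε/2 := by
        refine hNN i m ?_ l ?_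
        · exact le_trans (le_trans (Finset.le_sup hiT) (le_max_right _ _)) hm
        · exact le_trans (le_trans (Finset.le_sup hiT) (le_max_right _ _)) hl
      calc dist (F m x) (F l x)
          ≤ dist (F m x) (F m (D i)) + dist (F m (D i)) (F l (D i))
            + dist (F l (D i)) (F l x) := dist_triangle4 _ _ _ _
        _ < ε/8 + ε/2 + ε/8 := by
            have e1 := hend m hm
            have e2 := hend l hl
            rw [dist_comm (F l (D i)) (F l x)]
            linarith
        _ ≤ ε := by linarith
    have hCauX : ∀ x : EucSp n, CauchySeq (fun j => F j x) := by
      intro x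
      have hxk : x ∈ Metric.closedBall (0:EucSp n) ((⌈‖x‖⌉₊:ℝ)+1) := by
        rw [Metric.mem_closedBall, dist_zero_right]
        linarith [Nat.le_ceil ‖x‖]
      rw [Metric.cauchySeq_iff]
      intro ε hε
      obtain ⟨N, hN⟩ := Metric.uniformCauchySeqOn_iff.mp (hUC ⌈‖x‖⌉₊) ε hε
      exact ⟨N, fun m hm l hl => hN m hm l hl x hxk⟩
    set v : EucSp n → ℝ := fun x => limUnder atTop (fun j => F j x) with hv
    have hvt : ∀ x, Tendsto (fun j => F j x) atTop (𝓝 (v x)) :=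
      fun x => (hCauX x).tendsto_limUnder
    refine ⟨v, ?_⟩
    rw [tendstoLocallyUniformly_iff_forall_isCompact]
    intro K hK
    obtain ⟨rK, hrK⟩ := hK.isBounded.subset_closedBall (0:EucSp n)
    have hsub : K ⊆ Metric.closedBall (0:EucSp n) ((⌈rK⌉₊:ℝ)+1) :=
      hrK.trans (Metric.closedBall_subset_closedBall (by linarith [Nat.le_ceil rK]))
    exact ((hUC ⌈rK⌉₊).mono hsub).tendstoUniformlyOn_of_tendsto (fun x _ => hvt x)

end
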